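/- arXiv:1210.5659 — 4 statements merged into one kernel-verified Lean document; each statement's English description precedes it below -/
import Mathlib

section
/- The implementation distance d is well-defined (the defining system of equations has a unique least fixed point, since it is a contraction with Lipschitz constant λ on the complete space of functions into [0,∞]), and d is a pseudometric on the states of implementations: d(i,i) = 0 for every state i, d(i₁,i₂) = d(i₂,i₁) for all states i₁, i₂, and d(i₁,i₂) + d(i₂,i₃) ≥ d(i₁,i₃) for all states i₁, i₂, i₃. -/
open scoped ENNReal

namespace WMTSQuant

/-- A closed extended-integer interval `[lo, hi]` with `lo ∈ ℤ ∪ {-∞}`,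
`hi ∈ ℤ ∪ {∞}` and `lo ≤ hi`. -/
structure EInterval where
  lo : EReal
  hi : EReal
  lo_mem : lo = ⊥ ∨ ∃ n : ℤ, lo = ((n : ℝ) : EReal)
  hi_mem : hi = ⊤ ∨ ∃ n : ℤ, hi = ((n : ℝ) : EReal)
  lo_le_hi : lo ≤ hi

/-- Specification labels 𝕂 = Σ × 𝕀. -/
abbrev SLabel (Act : Type) := Act × EInterval

/-- The refinement order ⊑ on specification labels. -/
def LabelLE {Act : Type} (k k' : SLabel Act) : Prop :=
  k.1 = k'.1 ∧ k'.2.lo ≤ k.2.lo ∧ k.2.hi ≤ k'.2.hi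

/-- Implementation labels: singleton integer intervals. -/
def IsImpLabel {Act : Type} (k : SLabel Act) : Prop :=
  ∃ n : ℤ, k.2.lo = ((n : ℝ) : EReal) ∧ k.2.hi = ((n : ℝ) : EReal)

/-- Truncation of an extended real to `[0,∞]`. -/
noncomputable def erealToNNE (x : EReal) : ℝ≥0∞ :=
  if x = ⊤ then ⊤ else ENNReal.ofReal x.toReal

open Classical in
/-- The label distance d_𝕂. -/
noncomputable def dK {Act : Type} (k ℓ : SLabel Act) : ℝ≥0∞ :=
  if k.1 = ℓ.1 then erealToNNE (max (ℓ.2.lo - k.2.lo) (max (k.2.hi - ℓ.2.hi) 0)) else ⊤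

/-- Weighted modal transition systems. -/
structure WMTS (Act : Type) where
  State : Type
  init : State
  may : State → SLabel Act → State → Prop
  must : State → SLabel Act → State → Prop
  must_may : ∀ s k s', must s k s' → ∃ ℓ, LabelLE k ℓ ∧ may s ℓ s'

variable {Act : Type}

/-- Implementations: `must = may`, all labels singleton integer intervals. -/
def WMTS.IsImplementation (S : WMTS Act) : Prop :=
  (∀ s k s', S.may s k s' ↔ S.must s k s') ∧
    ∀ s k s', S.must s k s' → IsImpLabel k

/-- (Boolean) modal refinement `S₁ ≤ₘ S₂`. -/
def Refines (S₁ S₂ : WMTS Act) : Prop :=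
  ∃ R : S₁.State → S₂.State → Prop, R S₁.init S₂.init ∧
    ∀ s₁ s₂, R s₁ s₂ →
      (∀ k₁ t₁, S₁.may s₁ k₁ t₁ →
        ∃ k₂ t₂, S₂.may s₂ k₂ t₂ ∧ LabelLE k₁ k₂ ∧ R t₁ t₂) ∧
      (∀ k₂ t₂, S₂.must s₂ k₂ t₂ →
        ∃ k₁ t₁, S₁.must s₁ k₁ t₁ ∧ LabelLE k₁ k₂ ∧ R t₁ t₂)

/-- Implementation semantics ⟦S⟧. -/
def Impl (S : WMTS Act) : Set (WMTS Act) :=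
  {I | I.IsImplementation ∧ Refines I S}

/-- The endofunction whose least fixed point is the modal refinement distance. -/
noncomputable def dmF (lam : ℝ≥0∞) (S₁ S₂ : WMTS Act) :
    (S₁.State → S₂.State → ℝ≥0∞) →o (S₁.State → S₂.State → ℝ≥0∞) where
  toFun f := fun s₁ s₂ =>
    max
      (⨆ k₁, ⨆ t₁, ⨆ _ : S₁.may s₁ k₁ t₁,
        ⨅ k₂, ⨅ t₂, ⨅ _ : S₂.may s₂ k₂ t₂, dK k₁ k₂ + lam * f t₁ t₂)
      (⨆ k₂, ⨆ t₂, ⨆ _ : S₂.must s₂ k₂ t₂,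
        ⨅ k₁, ⨅ t₁, ⨅ _ : S₁.must s₁ k₁ t₁, dK k₁ k₂ + lam * f t₁ t₂)
  monotone' := by
    intro f g hfg s₁ s₂
    dsimp only
    gcongr with k₁ t₁ h k₂ t₂ h' k₂ t₂ h k₁ t₁ h' <;> exact hfg _ _

/-- The modal refinement distance between states. -/
noncomputable def dm (lam : ℝ≥0∞) (S₁ S₂ : WMTS Act) :
    S₁.State → S₂.State → ℝ≥0∞ :=
  OrderHom.lfp (dmF lam S₁ S₂)

/-- The modal refinement distance between systems. -/
noncomputable def dmInit (lam : ℝ≥0∞) (S₁ S₂ : WMTS Act) : ℝ≥0∞ :=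
  dm lam S₁ S₂ S₁.init S₂.init

/-- The endofunction whose least fixed point is the implementation distance. -/
noncomputable def diF (lam : ℝ≥0∞) (I₁ I₂ : WMTS Act) :
    (I₁.State → I₂.State → ℝ≥0∞) →o (I₁.State → I₂.State → ℝ≥0∞) where
  toFun f := fun i₁ i₂ =>
    max
      (⨆ k₁, ⨆ j₁, ⨆ _ : I₁.must i₁ k₁ j₁,
        ⨅ k₂, ⨅ j₂, ⨅ _ : I₂.must i₂ k₂ j₂, dK k₁ k₂ + lam * f j₁ j₂)
      (⨆ k₂, ⨆ j₂, ⨆ _ : I₂.must i₂ k₂ j₂,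
        ⨅ k₁, ⨅ j₁, ⨅ _ : I₁.must i₁ k₁ j₁, dK k₁ k₂ + lam * f j₁ j₂)
  monotone' := by
    intro f g hfg i₁ i₂
    dsimp only
    gcongr with k₁ t₁ h k₂ t₂ h' k₂ t₂ h k₁ t₁ h' <;> exact hfg _ _

/-- The implementation distance between states of implementations. -/
noncomputable def di (lam : ℝ≥0∞) (I₁ I₂ : WMTS Act) :
    I₁.State → I₂.State → ℝ≥0∞ :=
  OrderHom.lfp (diF lam I₁ I₂)

/-- The implementation distance between implementations. -/
noncomputable def diInit (lam : ℝ≥0∞) (I₁ I₂ : WMTS Act) : ℝ≥0∞ :=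
  di lam I₁ I₂ I₁.init I₂.init

/-- The thorough refinement distance. -/
noncomputable def dt (lam : ℝ≥0∞) (S₁ S₂ : WMTS Act) : ℝ≥0∞ :=
  ⨆ I₁ ∈ Impl S₁, ⨅ I₂ ∈ Impl S₂, diInit lam I₁ I₂


/-- Pointwise sum of intervals. -/
noncomputable def EInterval.add (I J : EInterval) : EInterval where
  lo := I.lo + J.lo
  hi := I.hi + J.hi
  lo_mem := by
    rcases I.lo_mem with h | ⟨n, h⟩
    · exact Or.inl (by rw [h, EReal.bot_add])
    · rcases J.lo_mem with h' | ⟨m, h'⟩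
      · exact Or.inl (by rw [h', EReal.add_bot])
      · exact Or.inr ⟨n + m, by rw [h, h', ← EReal.coe_add]; norm_cast⟩
  hi_mem := by
    rcases I.hi_mem with h | ⟨n, h⟩
    · exact Or.inl (by rw [h, EReal.top_add_of_ne_bot]
                       rcases J.hi_mem with h' | ⟨m, h'⟩ <;> simp [h'])
    · rcases J.hi_mem with h' | ⟨m, h'⟩
      · exact Or.inl (by rw [h', EReal.add_top_of_ne_bot]; simp [h])
      · exact Or.inr ⟨n + m, by rw [h, h', ← EReal.coe_add]; norm_cast⟩
  lo_le_hi := add_le_add I.lo_le_hi J.lo_le_hi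

/-- Widening `I ± δ` of an interval. -/
noncomputable def EInterval.widen (I : EInterval) (δ : ℕ) : EInterval where
  lo := I.lo - ((δ : ℝ) : EReal)
  hi := I.hi + ((δ : ℝ) : EReal)
  lo_mem := by
    rcases I.lo_mem with h | ⟨n, h⟩
    · exact Or.inl (by rw [h, EReal.bot_sub])
    · exact Or.inr ⟨n - δ, by rw [h, ← EReal.coe_sub]; norm_cast⟩
  hi_mem := by
    rcases I.hi_mem with h | ⟨n, h⟩
    · exact Or.inl (by rw [h, EReal.top_add_of_ne_bot]; exact EReal.coe_ne_bot _)
    · exact Or.inr ⟨n + δ, by rw [h, ← EReal.coe_add]; norm_cast⟩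
  lo_le_hi := by
    refine le_trans ?_ (le_trans I.lo_le_hi ?_)
    · rw [sub_eq_add_neg]
      nth_rewrite 2 [show I.lo = I.lo + 0 by rw [add_zero]]
      refine add_le_add le_rfl ?_
      rw [← EReal.coe_neg, ← EReal.coe_zero, EReal.coe_le_coe_iff]
      simp
    · nth_rewrite 1 [show I.hi = I.hi + 0 by rw [add_zero]]
      refine add_le_add le_rfl ?_
      rw [← EReal.coe_zero, EReal.coe_le_coe_iff]
      simp



/-- Symmetrization of a hemimetric. -/
noncomputable def symDist {α : Type*} (d : α → α → ℝ≥0∞) : α → α → ℝ≥0∞ :=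
  fun x y => max (d x y) (d y x)

/-- Product distance. -/
noncomputable def prodDist {α β : Type*} (d : α → α → ℝ≥0∞) (e : β → β → ℝ≥0∞) :
    α × β → α × β → ℝ≥0∞ :=
  fun p q => d p.1 q.1 + e p.2 q.2

/-- (Sequential) compactness of a set with respect to an `ℝ≥0∞`-valued distance. -/
def CompactIn {α : Type*} (d : α → α → ℝ≥0∞) (A : Set α) : Prop :=
  ∀ u : ℕ → α, (∀ n, u n ∈ A) →
    ∃ x ∈ A, ∃ φ : ℕ → ℕ, StrictMono φ ∧
      Filter.Tendsto (fun n => d x (u (φ n))) Filter.atTop (nhds 0)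

/-- Compactly branching WMTS. -/
def CompactlyBranching (lam : ℝ≥0∞) (S : WMTS Act) : Prop :=
  ∀ s : S.State,
    CompactIn (prodDist (symDist (dm lam S S)) (symDist dK))
      {p : S.State × SLabel Act | S.may s p.2 p.1} ∧
    CompactIn (prodDist (symDist (dm lam S S)) (symDist dK))
      {p : S.State × SLabel Act | S.must s p.2 p.1}

/-- Deterministic WMTS. -/
def Deterministic (S : WMTS Act) : Prop :=
  ∀ (s : S.State) (a : Act) (I₁ I₂ : EInterval) (t₁ t₂ : S.State),
    S.may s (a, I₁) t₁ → S.may s (a, I₂) t₂ → I₁ = I₂ ∧ t₁ = t₂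

/-- `S'` is an ε-relaxation of `S`. -/
def Relaxation (lam ε : ℝ≥0∞) (S S' : WMTS Act) : Prop :=
  Refines S S' ∧ dmInit lam S' S ≤ ε

/-- The ε-extended implementation semantics ⟦S⟧⁺ᵉ. -/
def ImplExt (lam ε : ℝ≥0∞) (S : WMTS Act) : Set (WMTS Act) :=
  {I | I.IsImplementation ∧ dmInit lam I S ≤ ε}

/-- The δ-widening S⁺δ of a WMTS. -/
noncomputable def WMTS.widen (S : WMTS Act) (δ : ℕ) : WMTS Act where
  State := S.State
  init := S.init
  may s k t := ∃ a I, S.may s (a, I) t ∧ k = (a, I.widen δ)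
  must s k t := ∃ a I, S.must s (a, I) t ∧ k = (a, I.widen δ)
  must_may := by
    rintro s k t ⟨a, I, h, rfl⟩
    obtain ⟨ℓ, hle, hmay⟩ := S.must_may _ _ _ h
    refine ⟨(ℓ.1, ℓ.2.widen δ), ⟨hle.1, ?_, ?_⟩, ℓ.1, ℓ.2, hmay, rfl⟩
    · exact EReal.sub_le_sub hle.2.1 le_rfl
    · exact add_le_add hle.2.2 le_rfl

/-- Definedness of label synchronization ⊕. -/
def OplusDefined (k ℓ : SLabel Act) : Prop := k.1 = ℓ.1

/-- Label synchronization ⊕ (adding the intervals). -/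
noncomputable def oplus (k ℓ : SLabel Act) : SLabel Act :=
  (k.1, k.2.add ℓ.2)

/-- Definedness of label quotient ⊖ (equal actions, the difference interval is a
valid extended-integer interval). -/
def OminusDefined (k ℓ : SLabel Act) : Prop :=
  k.1 = ℓ.1 ∧ k.2.lo - ℓ.2.lo ≤ k.2.hi - ℓ.2.hi ∧
    (k.2.lo - ℓ.2.lo = ⊥ ∨ ∃ n : ℤ, k.2.lo - ℓ.2.lo = ((n : ℝ) : EReal)) ∧
    (k.2.hi - ℓ.2.hi = ⊤ ∨ ∃ n : ℤ, k.2.hi - ℓ.2.hi = ((n : ℝ) : EReal))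

/-- Label quotient ⊖. -/
noncomputable def ominus (k ℓ : SLabel Act) (h : OminusDefined k ℓ) : SLabel Act :=
  (k.1, ⟨k.2.lo - ℓ.2.lo, k.2.hi - ℓ.2.hi, h.2.2.1, h.2.2.2, h.2.1⟩)

/-- Structural composition S₁ ∥ S₂ (CSP-style synchronization, adding weights). -/
noncomputable def par (S₁ S₂ : WMTS Act) : WMTS Act where
  State := S₁.State × S₂.State
  init := (S₁.init, S₂.init)
  may p k q := ∃ k₁ k₂, S₁.may p.1 k₁ q.1 ∧ S₂.may p.2 k₂ q.2 ∧
    OplusDefined k₁ k₂ ∧ k = oplus k₁ k₂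
  must p k q := ∃ k₁ k₂, S₁.must p.1 k₁ q.1 ∧ S₂.must p.2 k₂ q.2 ∧
    OplusDefined k₁ k₂ ∧ k = oplus k₁ k₂
  must_may := by
    rintro p k q ⟨k₁, k₂, h₁, h₂, hd, rfl⟩
    obtain ⟨ℓ₁, hle₁, hmay₁⟩ := S₁.must_may _ _ _ h₁
    obtain ⟨ℓ₂, hle₂, hmay₂⟩ := S₂.must_may _ _ _ h₂
    refine ⟨oplus ℓ₁ ℓ₂, ⟨?_, ?_, ?_⟩,
      ℓ₁, ℓ₂, hmay₁, hmay₂, by rw [OplusDefined, ← hle₁.1, ← hle₂.1]; exact hd, rfl⟩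
    · exact hle₁.1
    · exact add_le_add hle₁.2.1 hle₂.2.1
    · exact add_le_add hle₁.2.2 hle₂.2.2

section Quotient

variable (S₁ S₂ : WMTS Act)

/-- May transitions of the (unpruned) quotient; `none` is the universal state u. -/
def qmay : Option (S₁.State × S₂.State) → SLabel Act → Option (S₁.State × S₂.State) → Prop
  | some p, k, some q =>
      (∃ k₁ k₂, ∃ h : OminusDefined k₁ k₂,
        S₁.may p.1 k₁ q.1 ∧ S₂.may p.2 k₂ q.2 ∧ k = ominus k₁ k₂ h) ∨
      (∃ k₁ k₂, ∃ h : OminusDefined k₁ k₂,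
        S₁.must p.1 k₁ q.1 ∧ S₂.must p.2 k₂ q.2 ∧ k = ominus k₁ k₂ h)
  | some p, k, none => ∀ k₂ t₂, S₂.may p.2 k₂ t₂ → ¬ OplusDefined k k₂
  | none, _, none => True
  | none, _, some _ => False

/-- Must transitions of the (unpruned) quotient. -/
def qmust : Option (S₁.State × S₂.State) → SLabel Act → Option (S₁.State × S₂.State) → Prop
  | some p, k, some q =>
      ∃ k₁ k₂, ∃ h : OminusDefined k₁ k₂,
        S₁.must p.1 k₁ q.1 ∧ S₂.must p.2 k₂ q.2 ∧ k = ominus k₁ k₂ h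
  | _, _, _ => False

/-- Inconsistent states of the quotient. -/
def QBad : Option (S₁.State × S₂.State) → Prop
  | some p => ∃ k₁ t₁, S₁.must p.1 k₁ t₁ ∧
      ∀ k₂ t₂, S₂.must p.2 k₂ t₂ → ¬ OminusDefined k₁ k₂
  | none => False

/-- States removed by pruning: those that can reach an inconsistent state via
must transitions (reflexive-transitive closure of `pre`). -/
def QPruned (p : Option (S₁.State × S₂.State)) : Prop :=
  ∃ q, Relation.ReflTransGen (fun x y => ∃ k, qmust S₁ S₂ x k y) p q ∧ QBad S₁ S₂ q

/-- The quotient S₁ ⫽ S₂, defined whenever the initial state survives pruning. -/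
noncomputable def quotient' (h : ¬ QPruned S₁ S₂ (some (S₁.init, S₂.init))) :
    WMTS Act where
  State := {p : Option (S₁.State × S₂.State) // ¬ QPruned S₁ S₂ p}
  init := ⟨some (S₁.init, S₂.init), h⟩
  may p k q := qmay S₁ S₂ p.1 k q.1
  must p k q := qmust S₁ S₂ p.1 k q.1
  must_may := by
    rintro ⟨p, hp⟩ k ⟨q, hq⟩ hmust
    refine ⟨k, ⟨rfl, le_rfl, le_rfl⟩, ?_⟩
    cases p with
    | none => exact hmust.elim
    | some p =>
      cases q with
      | none => exact hmust.elim
      | some q => exact Or.inr hmust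

end Quotient

/-- Formulae of the logic L. -/
inductive Formula (Act : Type) where
  | tt : Formula Act
  | ff : Formula Act
  | diam : SLabel Act → Formula Act → Formula Act
  | box : SLabel Act → Formula Act → Formula Act
  | and : Formula Act → Formula Act → Formula Act
  | or : Formula Act → Formula Act → Formula Act

/-- Disjunction-free formulae. -/
def Formula.DisjFree : Formula Act → Prop
  | .tt => True
  | .ff => True
  | .diam _ φ => φ.DisjFree
  | .box _ φ => φ.DisjFree
  | .and φ ψ => φ.DisjFree ∧ ψ.DisjFree
  | .or _ _ => False

/-- Quantitative semantics ⟦φ⟧ : S → [0,∞] of the logic L. -/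
noncomputable def sem (lam : ℝ≥0∞) (S : WMTS Act) : Formula Act → S.State → ℝ≥0∞
  | .tt, _ => 0
  | .ff, _ => ⊤
  | .and φ ψ, s => max (sem lam S φ s) (sem lam S ψ s)
  | .or φ ψ, s => min (sem lam S φ s) (sem lam S ψ s)
  | .diam ℓ φ, s =>
      ⨅ k, ⨅ t, ⨅ _ : S.must s k t ∧ dK k ℓ ≠ ⊤, dK k ℓ + lam * sem lam S φ t
  | .box ℓ φ, s =>
      ⨆ k, ⨆ t, ⨆ _ : S.may s k t ∧ dK k ℓ ≠ ⊤, dK k ℓ + lam * sem lam S φ t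

/-- ⟦φ⟧S = ⟦φ⟧s⁰. -/
noncomputable def semInit (lam : ℝ≥0∞) (S : WMTS Act) (φ : Formula Act) : ℝ≥0∞ :=
  sem lam S φ S.init


section Aux

variable {Act : Type}

private lemma diF_apply (lam : ℝ≥0∞) (I₁ I₂ : WMTS Act)
    (f : I₁.State → I₂.State → ℝ≥0∞) (i₁ : I₁.State) (i₂ : I₂.State) :
    diF lam I₁ I₂ f i₁ i₂ =
      max
        (⨆ k₁, ⨆ j₁, ⨆ _ : I₁.must i₁ k₁ j₁,
          ⨅ k₂, ⨅ j₂, ⨅ _ : I₂.must i₂ k₂ j₂, dK k₁ k₂ + lam * f j₁ j₂)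
        (⨆ k₂, ⨆ j₂, ⨆ _ : I₂.must i₂ k₂ j₂,
          ⨅ k₁, ⨅ j₁, ⨅ _ : I₁.must i₁ k₁ j₁, dK k₁ k₂ + lam * f j₁ j₂) := rfl

open Classical in
private lemma dK_impl {k ℓ : SLabel Act} {n m : ℤ}
    (hk1 : k.2.lo = ((n : ℝ) : EReal)) (hk2 : k.2.hi = ((n : ℝ) : EReal))
    (hl1 : ℓ.2.lo = ((m : ℝ) : EReal)) (hl2 : ℓ.2.hi = ((m : ℝ) : EReal)) :
    dK k ℓ = if k.1 = ℓ.1 then ENNReal.ofReal |(n : ℝ) - m| else ⊤ := by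
  rw [dK]
  split_ifs with h
  · rw [hk1, hk2, hl1, hl2]
    have hmax : max (((m : ℝ) : EReal) - ((n : ℝ) : EReal))
        (max (((n : ℝ) : EReal) - ((m : ℝ) : EReal)) 0)
        = ((|(n : ℝ) - m| : ℝ) : EReal) := by
      have hmono := EReal.coe_strictMono.monotone
      rw [← EReal.coe_sub, ← EReal.coe_sub, ← EReal.coe_zero,
        ← hmono.map_max, ← hmono.map_max]
      congr 1
      rcases le_total ((n : ℝ)) m with h' | h'
      · rw [max_eq_right (by linarith : (n : ℝ) - m ≤ 0),
          max_eq_left (by linarith : (0 : ℝ) ≤ (m : ℝ) - n),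
          abs_of_nonpos (by linarith : (n : ℝ) - m ≤ 0)]
        ring
      · rw [max_eq_left (by linarith : (0 : ℝ) ≤ (n : ℝ) - m),
          max_eq_right (by linarith : (m : ℝ) - n ≤ (n : ℝ) - m),
          abs_of_nonneg (by linarith : (0 : ℝ) ≤ (n : ℝ) - m)]
    rw [hmax, erealToNNE]
    simp [EReal.toReal_coe]
  · rfl

private lemma dK_symm_impl {k ℓ : SLabel Act}
    (hk : IsImpLabel k) (hl : IsImpLabel ℓ) : dK k ℓ = dK ℓ k := by
  obtain ⟨n, hk1, hk2⟩ := hk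
  obtain ⟨m, hl1, hl2⟩ := hl
  rw [dK_impl hk1 hk2 hl1 hl2, dK_impl hl1 hl2 hk1 hk2]
  rcases eq_or_ne k.1 ℓ.1 with h | h
  · rw [if_pos h, if_pos h.symm, abs_sub_comm]
  · rw [if_neg h, if_neg (Ne.symm h)]

private lemma dK_self_impl {k : SLabel Act} (hk : IsImpLabel k) : dK k k = 0 := by
  obtain ⟨n, hk1, hk2⟩ := hk
  rw [dK_impl hk1 hk2 hk1 hk2]
  simp

private lemma dK_triangle_impl {k₁ k₂ k₃ : SLabel Act}
    (h1 : IsImpLabel k₁) (h2 : IsImpLabel k₂) (h3 : IsImpLabel k₃) :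
    dK k₁ k₃ ≤ dK k₁ k₂ + dK k₂ k₃ := by
  obtain ⟨n, ha1, ha2⟩ := h1
  obtain ⟨m, hb1, hb2⟩ := h2
  obtain ⟨p, hc1, hc2⟩ := h3
  rw [dK_impl ha1 ha2 hc1 hc2, dK_impl ha1 ha2 hb1 hb2, dK_impl hb1 hb2 hc1 hc2]
  rcases eq_or_ne k₁.1 k₂.1 with h12 | h12
  · rcases eq_or_ne k₂.1 k₃.1 with h23 | h23
    · rw [if_pos (h12.trans h23), if_pos h12, if_pos h23,
        ← ENNReal.ofReal_add (abs_nonneg _) (abs_nonneg _)]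
      exact ENNReal.ofReal_le_ofReal (abs_sub_le _ _ _)
    · simp [h12, h23]
  · simp [h12]

/-- The swap of a function is transformed by `diF` of the swapped systems
in the symmetric way. -/
private lemma diF_swap (lam : ℝ≥0∞) (A B : WMTS Act)
    (hA : A.IsImplementation) (hB : B.IsImplementation)
    (f : A.State → B.State → ℝ≥0∞) (a : A.State) (b : B.State) :
    diF lam B A (fun y x => f x y) b a = diF lam A B f a b := by
  rw [diF_apply, diF_apply, max_comm]
  congr 1
  · refine iSup_congr fun k₂ => iSup_congr fun j₂ => iSup_congr fun hm2 =>
      iInf_congr fun k₁ => iInf_congr fun j₁ => iInf_congr fun hm1 => ?_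
    rw [dK_symm_impl (hB.2 _ _ _ hm1) (hA.2 _ _ _ hm2)]
  · refine iSup_congr fun k₁ => iSup_congr fun j₁ => iSup_congr fun hm1 =>
      iInf_congr fun k₂ => iInf_congr fun j₂ => iInf_congr fun hm2 => ?_
    rw [dK_symm_impl (hB.2 _ _ _ hm1) (hA.2 _ _ _ hm2)]

end Aux

/-- the implementation distance is well-defined (the defining
system of equations has a unique least fixed point) and is a pseudometric. -/
theorem implementation_distance_wellDefined_and_pseudometric
    {Act : Type} (lam : ℝ≥0∞) (hlam0 : 0 < lam) (hlam1 : lam < 1)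
    (I₁ I₂ I₃ : WMTS Act)
    (h₁ : I₁.IsImplementation) (h₂ : I₂.IsImplementation)
    (h₃ : I₃.IsImplementation) :
    (∃! f : I₁.State → I₂.State → ℝ≥0∞,
        Function.IsFixedPt (diF lam I₁ I₂) f ∧
          ∀ g, Function.IsFixedPt (diF lam I₁ I₂) g → f ≤ g) ∧
    Function.IsFixedPt (diF lam I₁ I₂) (di lam I₁ I₂) ∧
    (∀ g, Function.IsFixedPt (diF lam I₁ I₂) g → di lam I₁ I₂ ≤ g) ∧
    (∀ i : I₁.State, di lam I₁ I₁ i i = 0) ∧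
    (∀ (i₁ : I₁.State) (i₂ : I₂.State),
      di lam I₁ I₂ i₁ i₂ = di lam I₂ I₁ i₂ i₁) ∧
    (∀ (i₁ : I₁.State) (i₂ : I₂.State) (i₃ : I₃.State),
      di lam I₁ I₃ i₁ i₃ ≤ di lam I₁ I₂ i₁ i₂ + di lam I₂ I₃ i₂ i₃) := by
  classical
  have fix12 : diF lam I₁ I₂ (di lam I₁ I₂) = di lam I₁ I₂ := OrderHom.map_lfp _
  have fix21 : diF lam I₂ I₁ (di lam I₂ I₁) = di lam I₂ I₁ := OrderHom.map_lfp _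
  have fix23 : diF lam I₂ I₃ (di lam I₂ I₃) = di lam I₂ I₃ := OrderHom.map_lfp _
  refine ⟨⟨di lam I₁ I₂, ⟨fix12, fun g hg => OrderHom.lfp_le_fixed _ hg⟩, ?_⟩,
    fix12, fun g hg => OrderHom.lfp_le_fixed _ hg, ?_, ?_, ?_⟩
  · -- uniqueness of the least fixed point
    rintro g ⟨hg1, hg2⟩
    exact le_antisymm (hg2 _ fix12) (OrderHom.lfp_le_fixed _ hg1)
  · -- reflexivity
    intro i
    set D : I₁.State → I₁.State → ℝ≥0∞ := fun a b => if a = b then 0 else ⊤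
      with hD
    have hpre : diF lam I₁ I₁ D ≤ D := by
      intro a b
      rcases eq_or_ne a b with rfl | hab
      · have hDa : D a a = 0 := by simp [hD]
        rw [hDa, diF_apply]
        refine max_le ?_ ?_ <;>
        · refine iSup_le fun k => iSup_le fun j => iSup_le fun hm => ?_
          refine le_trans (iInf_le_of_le k (iInf_le_of_le j
            (iInf_le_of_le hm le_rfl))) ?_
          have hDj : D j j = 0 := by simp [hD]
          rw [hDj, dK_self_impl (h₁.2 _ _ _ hm), mul_zero, add_zero]
      · have hDb : D a b = ⊤ := by simp [hD, hab]
        rw [hDb]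
        exact le_top
    have h0 := OrderHom.lfp_le (diF lam I₁ I₁) hpre i i
    have hDi : D i i = 0 := by simp [hD]
    rw [hDi] at h0
    exact le_antisymm h0 zero_le
  · -- symmetry
    intro i₁ i₂
    have sw12 : diF lam I₂ I₁ (fun y x => di lam I₁ I₂ x y)
        = fun y x => di lam I₁ I₂ x y := by
      funext b a
      rw [diF_swap lam I₁ I₂ h₁ h₂, congrFun (congrFun fix12 a) b]
    have sw21 : diF lam I₁ I₂ (fun x y => di lam I₂ I₁ y x)
        = fun x y => di lam I₂ I₁ y x := by
      funext a b
      rw [diF_swap lam I₂ I₁ h₂ h₁, congrFun (congrFun fix21 b) a]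
    have le1 := OrderHom.lfp_le_fixed (diF lam I₁ I₂) sw21
    have le2 := OrderHom.lfp_le_fixed (diF lam I₂ I₁) sw12
    exact le_antisymm (le1 i₁ i₂) (le2 i₂ i₁)
  · -- triangle inequality
    intro i₁ i₂ i₃
    set f := di lam I₁ I₂ with hfdef
    set g := di lam I₂ I₃ with hgdef
    set h : I₁.State → I₃.State → ℝ≥0∞ := fun a c => ⨅ b, f a b + g b c
      with hhdef
    have hpre : diF lam I₁ I₃ h ≤ h := by
      intro a c
      rw [diF_apply]
      refine le_iInf fun b => max_le ?_ ?_
      · refine iSup_le fun k₁ => iSup_le fun j₁ => iSup_le fun hm1 => ?_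
        have hf : (⨅ k₂, ⨅ j₂, ⨅ _ : I₂.must b k₂ j₂,
            dK k₁ k₂ + lam * f j₁ j₂) ≤ f a b := by
          have h1 : (⨅ k₂, ⨅ j₂, ⨅ _ : I₂.must b k₂ j₂,
              dK k₁ k₂ + lam * f j₁ j₂) ≤ diF lam I₁ I₂ f a b := by
            rw [diF_apply]
            refine le_trans ?_ (le_max_left _ _)
            apply le_iSup_of_le k₁
            apply le_iSup_of_le j₁
            exact le_iSup_of_le hm1 le_rfl
          rwa [fix12] at h1
        refine le_trans ?_ (add_le_add_left hf (g b c))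
        simp only [ENNReal.iInf_add]
        refine le_iInf fun k₂ => le_iInf fun j₂ => le_iInf fun hm2 => ?_
        have hg : (⨅ k₃, ⨅ j₃, ⨅ _ : I₃.must c k₃ j₃,
            dK k₂ k₃ + lam * g j₂ j₃) ≤ g b c := by
          have h1 : (⨅ k₃, ⨅ j₃, ⨅ _ : I₃.must c k₃ j₃,
              dK k₂ k₃ + lam * g j₂ j₃) ≤ diF lam I₂ I₃ g b c := by
            rw [diF_apply]
            refine le_trans ?_ (le_max_left _ _)
            apply le_iSup_of_le k₂
            apply le_iSup_of_le j₂
            exact le_iSup_of_le hm2 le_rfl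
          rwa [fix23] at h1
        refine le_trans ?_ (add_le_add_right hg _)
        simp only [ENNReal.add_iInf]
        refine le_iInf fun k₃ => le_iInf fun j₃ => le_iInf fun hm3 => ?_
        refine le_trans (iInf_le_of_le k₃ (iInf_le_of_le j₃
          (iInf_le_of_le hm3 le_rfl))) ?_
        have hh : h j₁ j₃ ≤ f j₁ j₂ + g j₂ j₃ := iInf_le _ j₂
        have htri : dK k₁ k₃ ≤ dK k₁ k₂ + dK k₂ k₃ :=
          dK_triangle_impl (h₁.2 _ _ _ hm1) (h₂.2 _ _ _ hm2) (h₃.2 _ _ _ hm3)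
        calc dK k₁ k₃ + lam * h j₁ j₃
            ≤ (dK k₁ k₂ + dK k₂ k₃) + (lam * f j₁ j₂ + lam * g j₂ j₃) := by
              refine add_le_add htri ?_
              rw [← mul_add]
              exact mul_le_mul_right hh _
          _ = dK k₁ k₂ + lam * f j₁ j₂ + (dK k₂ k₃ + lam * g j₂ j₃) := by ring
      · refine iSup_le fun k₃ => iSup_le fun j₃ => iSup_le fun hm3 => ?_
        have hg : (⨅ k₂, ⨅ j₂, ⨅ _ : I₂.must b k₂ j₂,
            dK k₂ k₃ + lam * g j₂ j₃) ≤ g b c := by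
          have h1 : (⨅ k₂, ⨅ j₂, ⨅ _ : I₂.must b k₂ j₂,
              dK k₂ k₃ + lam * g j₂ j₃) ≤ diF lam I₂ I₃ g b c := by
            rw [diF_apply]
            refine le_trans ?_ (le_max_right _ _)
            apply le_iSup_of_le k₃
            apply le_iSup_of_le j₃
            exact le_iSup_of_le hm3 le_rfl
          rwa [fix23] at h1
        refine le_trans ?_ (add_le_add_right hg (f a b))
        simp only [ENNReal.add_iInf]
        refine le_iInf fun k₂ => le_iInf fun j₂ => le_iInf fun hm2 => ?_
        have hf : (⨅ k₁, ⨅ j₁, ⨅ _ : I₁.must a k₁ j₁,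
            dK k₁ k₂ + lam * f j₁ j₂) ≤ f a b := by
          have h1 : (⨅ k₁, ⨅ j₁, ⨅ _ : I₁.must a k₁ j₁,
              dK k₁ k₂ + lam * f j₁ j₂) ≤ diF lam I₁ I₂ f a b := by
            rw [diF_apply]
            refine le_trans ?_ (le_max_right _ _)
            apply le_iSup_of_le k₂
            apply le_iSup_of_le j₂
            exact le_iSup_of_le hm2 le_rfl
          rwa [fix12] at h1
        refine le_trans ?_ (add_le_add_left hf _)
        simp only [ENNReal.iInf_add]
        refine le_iInf fun k₁ => le_iInf fun j₁ => le_iInf fun hm1 => ?_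
        refine le_trans (iInf_le_of_le k₁ (iInf_le_of_le j₁
          (iInf_le_of_le hm1 le_rfl))) ?_
        have hh : h j₁ j₃ ≤ f j₁ j₂ + g j₂ j₃ := iInf_le _ j₂
        have htri : dK k₁ k₃ ≤ dK k₁ k₂ + dK k₂ k₃ :=
          dK_triangle_impl (h₁.2 _ _ _ hm1) (h₂.2 _ _ _ hm2) (h₃.2 _ _ _ hm3)
        calc dK k₁ k₃ + lam * h j₁ j₃
            ≤ (dK k₁ k₂ + dK k₂ k₃) + (lam * f j₁ j₂ + lam * g j₂ j₃) := by
              refine add_le_add htri ?_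
              rw [← mul_add]
              exact mul_le_mul_right hh _
          _ = dK k₁ k₂ + lam * f j₁ j₂ + (dK k₂ k₃ + lam * g j₂ j₃) := by ring
    have hle := OrderHom.lfp_le (diF lam I₁ I₃) hpre
    exact le_trans (hle i₁ i₃) (iInf_le _ i₂)

end WMTSQuant
end

section
/- The modal refinement distance d_m is well-defined (the defining system of equations, being a contraction with Lipschitz constant λ, has a unique least fixed point) and is a hemimetric: d_m(s,s) = 0 for every state s of a WMTS, and d_m(s₁,s₂) + d_m(s₂,s₃) ≥ d_m(s₁,s₃) for all states s₁, s₂, s₃ of WMTS S₁, S₂, S₃. -/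
open scoped ENNReal

namespace WMTSQuant

variable {Act : Type}

/-! ### Auxiliary lemmas for Statement 4 -/

@[simp] lemma erealToNNE_bot' : erealToNNE ⊥ = 0 := by simp [erealToNNE]
@[simp] lemma erealToNNE_top' : erealToNNE ⊤ = ⊤ := by simp [erealToNNE]
@[simp] lemma erealToNNE_coe' (r : ℝ) : erealToNNE ((r : ℝ) : EReal) = ENNReal.ofReal r := by
  simp [erealToNNE]
@[simp] lemma erealToNNE_zero' : erealToNNE 0 = 0 := by
  have : ((0 : ℝ) : EReal) = (0 : EReal) := by norm_cast
  rw [← this, erealToNNE_coe']; simp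

lemma erealToNNE_mono : Monotone erealToNNE := by
  intro x y h
  induction x using EReal.rec with
  | bot => simp
  | top => simp [top_le_iff.mp h]
  | coe x =>
    induction y using EReal.rec with
    | bot => exact absurd h (by simp)
    | top => simp
    | coe y => simpa using ENNReal.ofReal_le_ofReal (by exact_mod_cast h)

lemma erealToNNE_tri (x y z : EReal) :
    erealToNNE (z - x) ≤ erealToNNE (y - x) + erealToNNE (z - y) := by
  induction z using EReal.rec with
  | bot => simp [EReal.bot_sub]
  | top =>
    induction x using EReal.rec with
    | top => simp [sub_eq_add_neg]
    | bot =>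
      induction y using EReal.rec with
      | bot => simp [sub_eq_add_neg]
      | top => simp [sub_eq_add_neg]
      | coe y => simp [sub_eq_add_neg]
    | coe x =>
      induction y using EReal.rec with
      | bot => simp [sub_eq_add_neg]
      | top => simp [sub_eq_add_neg]
      | coe y => simp [sub_eq_add_neg]
  | coe z =>
    induction x using EReal.rec with
    | top => simp [sub_eq_add_neg]
    | bot =>
      induction y using EReal.rec with
      | bot => simp [sub_eq_add_neg]
      | top => simp [sub_eq_add_neg]
      | coe y => simp [sub_eq_add_neg]
    | coe x =>
      induction y using EReal.rec with
      | bot => simp [sub_eq_add_neg]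
      | top => simp [sub_eq_add_neg]
      | coe y =>
        rw [← EReal.coe_sub, ← EReal.coe_sub, ← EReal.coe_sub]
        simp only [erealToNNE_coe']
        rw [show z - x = (y - x) + (z - y) by ring]
        exact ENNReal.ofReal_add_le

lemma ereal_sub_self_nonpos (x : EReal) : x - x ≤ 0 := by
  induction x using EReal.rec with
  | bot => simp [sub_eq_add_neg]
  | top => simp [sub_eq_add_neg]
  | coe x => rw [← EReal.coe_sub]; norm_num

lemma dK_self {Act : Type} (k : SLabel Act) : dK k k = 0 := by
  refine le_antisymm ?_ (zero_le)
  unfold dK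
  rw [if_pos rfl]
  calc erealToNNE (max (k.2.lo - k.2.lo) (max (k.2.hi - k.2.hi) 0))
      ≤ erealToNNE 0 := erealToNNE_mono
        (max_le (ereal_sub_self_nonpos _) (max_le (ereal_sub_self_nonpos _) le_rfl))
    _ = 0 := erealToNNE_zero'

lemma dK_triangle {Act : Type} (k₁ k₂ k₃ : SLabel Act) :
    dK k₁ k₃ ≤ dK k₁ k₂ + dK k₂ k₃ := by
  unfold dK
  by_cases h12 : k₁.1 = k₂.1
  · by_cases h23 : k₂.1 = k₃.1
    · rw [if_pos h12, if_pos h23, if_pos (h12.trans h23)]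
      rw [erealToNNE_mono.map_max, erealToNNE_mono.map_max, erealToNNE_zero']
      refine max_le ?_ (max_le ?_ (zero_le))
      · refine le_trans (erealToNNE_tri k₁.2.lo k₂.2.lo k₃.2.lo) (add_le_add ?_ ?_) <;>
          exact erealToNNE_mono (le_max_left _ _)
      · refine le_trans (erealToNNE_tri k₃.2.hi k₂.2.hi k₁.2.hi) ?_
        rw [add_comm]
        refine add_le_add ?_ ?_ <;>
          exact erealToNNE_mono (le_max_of_le_right (le_max_left _ _))
    · rw [if_neg h23]; simp
  · rw [if_neg h12]; simp

lemma dmF_apply {Act : Type} (lam : ℝ≥0∞) (S₁ S₂ : WMTS Act)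
    (f : S₁.State → S₂.State → ℝ≥0∞) (s₁ : S₁.State) (s₂ : S₂.State) :
    dmF lam S₁ S₂ f s₁ s₂ =
      max
        (⨆ k₁, ⨆ t₁, ⨆ _ : S₁.may s₁ k₁ t₁,
          ⨅ k₂, ⨅ t₂, ⨅ _ : S₂.may s₂ k₂ t₂, dK k₁ k₂ + lam * f t₁ t₂)
        (⨆ k₂, ⨆ t₂, ⨆ _ : S₂.must s₂ k₂ t₂,
          ⨅ k₁, ⨅ t₁, ⨅ _ : S₁.must s₁ k₁ t₁, dK k₁ k₂ + lam * f t₁ t₂) := rfl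

lemma dm_isFixedPt {Act : Type} (lam : ℝ≥0∞) (S₁ S₂ : WMTS Act) :
    Function.IsFixedPt (dmF lam S₁ S₂) (dm lam S₁ S₂) :=
  OrderHom.map_lfp _

lemma dm_least {Act : Type} (lam : ℝ≥0∞) (S₁ S₂ : WMTS Act)
    (g : S₁.State → S₂.State → ℝ≥0∞) (hg : Function.IsFixedPt (dmF lam S₁ S₂) g) :
    dm lam S₁ S₂ ≤ g :=
  OrderHom.lfp_le _ (le_of_eq hg)

lemma dm_unfold {Act : Type} (lam : ℝ≥0∞) (S₁ S₂ : WMTS Act)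
    (s₁ : S₁.State) (s₂ : S₂.State) :
    dm lam S₁ S₂ s₁ s₂ =
      max
        (⨆ k₁, ⨆ t₁, ⨆ _ : S₁.may s₁ k₁ t₁,
          ⨅ k₂, ⨅ t₂, ⨅ _ : S₂.may s₂ k₂ t₂, dK k₁ k₂ + lam * dm lam S₁ S₂ t₁ t₂)
        (⨆ k₂, ⨆ t₂, ⨆ _ : S₂.must s₂ k₂ t₂,
          ⨅ k₁, ⨅ t₁, ⨅ _ : S₁.must s₁ k₁ t₁, dK k₁ k₂ + lam * dm lam S₁ S₂ t₁ t₂) := by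
  conv_lhs => rw [show dm lam S₁ S₂ = dmF lam S₁ S₂ (dm lam S₁ S₂) from (dm_isFixedPt lam S₁ S₂).symm]
  exact dmF_apply lam S₁ S₂ _ s₁ s₂

lemma dm_ge_may {Act : Type} (lam : ℝ≥0∞) (S₁ S₂ : WMTS Act)
    {s₁ t₁ : S₁.State} {k₁ : SLabel Act} (h : S₁.may s₁ k₁ t₁) (s₂ : S₂.State) :
    (⨅ k₂, ⨅ t₂, ⨅ _ : S₂.may s₂ k₂ t₂, dK k₁ k₂ + lam * dm lam S₁ S₂ t₁ t₂)
      ≤ dm lam S₁ S₂ s₁ s₂ := by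
  rw [dm_unfold]
  exact le_max_of_le_left (le_iSup_of_le k₁ (le_iSup_of_le t₁ (le_iSup_of_le h le_rfl)))

lemma dm_ge_must {Act : Type} (lam : ℝ≥0∞) (S₁ S₂ : WMTS Act)
    {s₂ t₂ : S₂.State} {k₂ : SLabel Act} (h : S₂.must s₂ k₂ t₂) (s₁ : S₁.State) :
    (⨅ k₁, ⨅ t₁, ⨅ _ : S₁.must s₁ k₁ t₁, dK k₁ k₂ + lam * dm lam S₁ S₂ t₁ t₂)
      ≤ dm lam S₁ S₂ s₁ s₂ := by
  rw [dm_unfold]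
  exact le_max_of_le_right (le_iSup_of_le k₂ (le_iSup_of_le t₂ (le_iSup_of_le h le_rfl)))

lemma dm_self {Act : Type} (lam : ℝ≥0∞) (S : WMTS Act) (s : S.State) :
    dm lam S S s s = 0 := by
  classical
  refine le_antisymm ?_ (zero_le)
  set c : S.State → S.State → ℝ≥0∞ := fun a b => if a = b then 0 else ⊤ with hc
  have hcz : ∀ t : S.State, c t t = 0 := fun t => if_pos rfl
  have hpre : dmF lam S S c ≤ c := by
    intro a b
    by_cases hab : a = b
    · subst hab
      rw [hcz a, dmF_apply]
      refine max_le (iSup_le fun k => iSup_le fun t => iSup_le fun h => ?_)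
        (iSup_le fun k => iSup_le fun t => iSup_le fun h => ?_)
      · refine le_trans (iInf_le_of_le k (iInf_le_of_le t (iInf_le_of_le h le_rfl))) ?_
        simp [dK_self, hcz]
      · refine le_trans (iInf_le_of_le k (iInf_le_of_le t (iInf_le_of_le h le_rfl))) ?_
        simp [dK_self, hcz]
    · calc dmF lam S S c a b ≤ ⊤ := le_top
        _ = c a b := (if_neg hab).symm
  have hle : dm lam S S ≤ c := OrderHom.lfp_le _ hpre
  calc dm lam S S s s ≤ c s s := hle s s
    _ = 0 := hcz s

lemma dm_triangle {Act : Type} (lam : ℝ≥0∞) (S₁ S₂ S₃ : WMTS Act)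
    (s₁ : S₁.State) (s₂ : S₂.State) (s₃ : S₃.State) :
    dm lam S₁ S₃ s₁ s₃ ≤ dm lam S₁ S₂ s₁ s₂ + dm lam S₂ S₃ s₂ s₃ := by
  set H : S₁.State → S₃.State → ℝ≥0∞ :=
    fun a c => ⨅ b, dm lam S₁ S₂ a b + dm lam S₂ S₃ b c with hH
  have hpre : dmF lam S₁ S₃ H ≤ H := by
    intro a c
    refine le_iInf fun b => ?_
    rw [dmF_apply]
    apply max_le
    · refine iSup_le fun k₁ => iSup_le fun t₁ => iSup_le fun h1 => ?_
      refine le_trans ?_ (add_le_add_left (dm_ge_may lam S₁ S₂ h1 b) (dm lam S₂ S₃ b c))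
      simp only [ENNReal.iInf_add]
      refine le_iInf fun k₂ => le_iInf fun t₂ => le_iInf fun h2 => ?_
      refine le_trans ?_ (add_le_add_right (dm_ge_may lam S₂ S₃ h2 c) _)
      simp only [ENNReal.add_iInf]
      refine le_iInf fun k₃ => le_iInf fun t₃ => le_iInf fun h3 => ?_
      refine le_trans (iInf_le_of_le k₃ (iInf_le_of_le t₃ (iInf_le_of_le h3 le_rfl))) ?_
      have hH' : H t₁ t₃ ≤ dm lam S₁ S₂ t₁ t₂ + dm lam S₂ S₃ t₂ t₃ := iInf_le _ t₂
      calc dK k₁ k₃ + lam * H t₁ t₃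
          ≤ (dK k₁ k₂ + dK k₂ k₃) + lam * (dm lam S₁ S₂ t₁ t₂ + dm lam S₂ S₃ t₂ t₃) :=
            add_le_add (dK_triangle k₁ k₂ k₃) (mul_le_mul_right hH' lam)
        _ = dK k₁ k₂ + lam * dm lam S₁ S₂ t₁ t₂ + (dK k₂ k₃ + lam * dm lam S₂ S₃ t₂ t₃) := by
            ring
    · refine iSup_le fun k₃ => iSup_le fun t₃ => iSup_le fun h3 => ?_
      refine le_trans ?_ (add_le_add_right (dm_ge_must lam S₂ S₃ h3 b) (dm lam S₁ S₂ a b))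
      simp only [ENNReal.add_iInf]
      refine le_iInf fun k₂ => le_iInf fun t₂ => le_iInf fun h2 => ?_
      refine le_trans ?_ (add_le_add_left (dm_ge_must lam S₁ S₂ h2 a) _)
      simp only [ENNReal.iInf_add]
      refine le_iInf fun k₁ => le_iInf fun t₁ => le_iInf fun h1 => ?_
      refine le_trans (iInf_le_of_le k₁ (iInf_le_of_le t₁ (iInf_le_of_le h1 le_rfl))) ?_
      have hH' : H t₁ t₃ ≤ dm lam S₁ S₂ t₁ t₂ + dm lam S₂ S₃ t₂ t₃ := iInf_le _ t₂
      calc dK k₁ k₃ + lam * H t₁ t₃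
          ≤ (dK k₁ k₂ + dK k₂ k₃) + lam * (dm lam S₁ S₂ t₁ t₂ + dm lam S₂ S₃ t₂ t₃) :=
            add_le_add (dK_triangle k₁ k₂ k₃) (mul_le_mul_right hH' lam)
        _ = dK k₁ k₂ + lam * dm lam S₁ S₂ t₁ t₂ + (dK k₂ k₃ + lam * dm lam S₂ S₃ t₂ t₃) := by
            ring
  have hle : dm lam S₁ S₃ ≤ H := OrderHom.lfp_le _ hpre
  exact le_trans (hle s₁ s₃) (iInf_le _ s₂)

/-- the modal refinement distance is well-defined (the defining
system of equations has a unique least fixed point) and is a hemimetric. -/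
theorem dm_wellDefined_and_hemimetric {Act : Type} (lam : ℝ≥0∞)
    (hlam0 : 0 < lam) (hlam1 : lam < 1) (S S₁ S₂ S₃ : WMTS Act) :
    (∃! f : S₁.State → S₂.State → ℝ≥0∞,
        Function.IsFixedPt (dmF lam S₁ S₂) f ∧
          ∀ g, Function.IsFixedPt (dmF lam S₁ S₂) g → f ≤ g) ∧
    Function.IsFixedPt (dmF lam S₁ S₂) (dm lam S₁ S₂) ∧
    (∀ g, Function.IsFixedPt (dmF lam S₁ S₂) g → dm lam S₁ S₂ ≤ g) ∧
    (∀ s : S.State, dm lam S S s s = 0) ∧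
    (∀ (s₁ : S₁.State) (s₂ : S₂.State) (s₃ : S₃.State),
      dm lam S₁ S₃ s₁ s₃ ≤ dm lam S₁ S₂ s₁ s₂ + dm lam S₂ S₃ s₂ s₃) := by
  refine ⟨⟨dm lam S₁ S₂, ⟨dm_isFixedPt lam S₁ S₂, dm_least lam S₁ S₂⟩, ?_⟩,
    dm_isFixedPt lam S₁ S₂, dm_least lam S₁ S₂,
    fun s => dm_self lam S s, fun s₁ s₂ s₃ => dm_triangle lam S₁ S₂ S₃ s₁ s₂ s₃⟩
  rintro g ⟨hg, hleast⟩
  exact le_antisymm (hleast _ (dm_isFixedPt lam S₁ S₂)) (dm_least lam S₁ S₂ g hg)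

end WMTSQuant
end

section
/- For every WMTS S and every δ ∈ ℕ, the δ-widening S^{+δ} is a (1−λ)⁻¹·δ-relaxation of S; that is, S ≤_m S^{+δ} and d_m(S^{+δ},S) ≤ (1−λ)⁻¹·δ. -/
open scoped ENNReal

namespace WMTSQuant

variable {Act : Type}

lemma erealToNNE_le_nat {x : EReal} {δ : ℕ} (h : x ≤ ((δ : ℝ) : EReal)) :
    erealToNNE x ≤ (δ : ℝ≥0∞) := by
  have hx : x ≠ ⊤ := (h.trans_lt (EReal.coe_lt_top _)).ne
  rw [erealToNNE, if_neg hx]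
  rcases eq_or_ne x ⊥ with hb | hb
  · simp [hb]
  · have := EReal.toReal_le_toReal h hb (EReal.coe_ne_top _)
    rw [EReal.toReal_coe] at this
    calc ENNReal.ofReal x.toReal ≤ ENNReal.ofReal (δ : ℝ) := ENNReal.ofReal_le_ofReal this
      _ = (δ : ℝ≥0∞) := ENNReal.ofReal_natCast δ

lemma dK_widen_le {Act : Type} (a : Act) (I : EInterval) (δ : ℕ) :
    dK (a, I.widen δ) (a, I) ≤ (δ : ℝ≥0∞) := by
  rw [dK, if_pos rfl]
  refine erealToNNE_le_nat ?_
  have h0 : ((0 : ℝ) : EReal) ≤ ((δ : ℝ) : EReal) := by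
    rw [EReal.coe_le_coe_iff]; positivity
  refine max_le ?_ (max_le ?_ (by simpa using h0))
  · -- I.lo - (I.lo - δ) ≤ δ
    show I.lo - (I.lo - ((δ : ℝ) : EReal)) ≤ ((δ : ℝ) : EReal)
    rcases I.lo_mem with h | ⟨n, h⟩
    · rw [h, EReal.bot_sub]
      exact bot_le
    · rw [h, ← EReal.coe_sub, ← EReal.coe_sub, EReal.coe_le_coe_iff]
      linarith
  · -- (I.hi + δ) - I.hi ≤ δ
    show (I.hi + ((δ : ℝ) : EReal)) - I.hi ≤ ((δ : ℝ) : EReal)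
    rcases I.hi_mem with h | ⟨n, h⟩
    · rw [h]
      have h2 : (⊤ : EReal) + ((δ : ℝ) : EReal) = ⊤ :=
        EReal.top_add_of_ne_bot (EReal.coe_ne_bot _)
      rw [h2, sub_eq_add_neg]
      simp
    · rw [h, ← EReal.coe_add, ← EReal.coe_sub, EReal.coe_le_coe_iff]
      linarith

lemma labelLE_widen {Act : Type} (a : Act) (I : EInterval) (δ : ℕ) :
    LabelLE (a, I) (a, I.widen δ) := by
  refine ⟨rfl, ?_, ?_⟩
  · show I.lo - ((δ : ℝ) : EReal) ≤ I.lo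
    rw [sub_eq_add_neg]
    nth_rewrite 2 [show I.lo = I.lo + 0 by rw [add_zero]]
    refine add_le_add le_rfl ?_
    rw [← EReal.coe_neg, ← EReal.coe_zero, EReal.coe_le_coe_iff]
    simp
  · show I.hi ≤ I.hi + ((δ : ℝ) : EReal)
    nth_rewrite 1 [show I.hi = I.hi + 0 by rw [add_zero]]
    refine add_le_add le_rfl ?_
    rw [← EReal.coe_zero, EReal.coe_le_coe_iff]
    simp

/-- the δ-widening of any WMTS S is a (1−λ)⁻¹δ-relaxation of S:
S ≤ₘ S⁺δ and d_m(S⁺δ, S) ≤ (1−λ)⁻¹·δ. -/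
theorem widening_is_relaxation {Act : Type} (lam : ℝ≥0∞)
    (hlam0 : 0 < lam) (hlam1 : lam < 1) (S : WMTS Act) (δ : ℕ) :
    Relaxation lam ((1 - lam)⁻¹ * (δ : ℝ≥0∞)) S (S.widen δ) := by
  classical
  constructor
  · -- S ≤ₘ S⁺δ with the identity relation
    refine ⟨fun s t => s = t, rfl, ?_⟩
    rintro s₁ s₂ rfl
    constructor
    · rintro ⟨a, I⟩ t₁ hmay
      exact ⟨(a, I.widen δ), t₁, ⟨a, I, hmay, rfl⟩, labelLE_widen a I δ, rfl⟩
    · rintro k₂ t₂ ⟨a, I, hmust, rfl⟩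
      exact ⟨(a, I), t₂, hmust, labelLE_widen a I δ, rfl⟩
  · -- d_m(S⁺δ, S) ≤ (1−λ)⁻¹·δ
    set c : ℝ≥0∞ := (1 - lam)⁻¹ * (δ : ℝ≥0∞) with hc
    have h0 : (1 - lam) ≠ 0 := by simpa [tsub_eq_zero_iff_le] using hlam1.not_ge
    have ht : (1 - lam) ≠ ⊤ := ne_top_of_le_ne_top ENNReal.one_ne_top tsub_le_self
    have key : (1 : ℝ≥0∞) + lam * (1 - lam)⁻¹ = (1 - lam)⁻¹ := by
      calc (1 : ℝ≥0∞) + lam * (1 - lam)⁻¹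
          = (1 - lam) * (1 - lam)⁻¹ + lam * (1 - lam)⁻¹ := by
            rw [ENNReal.mul_inv_cancel h0 ht]
        _ = ((1 - lam) + lam) * (1 - lam)⁻¹ := by rw [add_mul]
        _ = (1 - lam)⁻¹ := by rw [tsub_add_cancel_of_le hlam1.le, one_mul]
    have harith : (δ : ℝ≥0∞) + lam * c ≤ c := by
      have h : (δ : ℝ≥0∞) + lam * c = ((1 : ℝ≥0∞) + lam * (1 - lam)⁻¹) * (δ : ℝ≥0∞) := by
        rw [hc]; ring
      rw [h, key, hc]
    -- the candidate prefixed point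
    set g : (S.widen δ).State → S.State → ℝ≥0∞ :=
      fun s t => if s = t then c else ⊤ with hgdef
    have hg : ∀ t : S.State, g t t = c := fun t => if_pos rfl
    have hpre : (dmF lam (S.widen δ) S) g ≤ g := by
      intro s₁ s₂
      rcases eq_or_ne s₁ s₂ with rfl | hne
      · refine le_trans ?_ (hg s₁).ge
        refine max_le ?_ ?_
        · refine iSup_le fun k₁ => iSup_le fun t₁ => iSup_le ?_
          rintro ⟨a, I, hmay, rfl⟩
          have hb : dK (a, I.widen δ) (a, I) + lam * g t₁ t₁ ≤ c := by
            rw [hg t₁]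
            exact le_trans (add_le_add_left (dK_widen_le a I δ) _) harith
          exact le_trans (iInf_le_of_le (a, I) (iInf_le_of_le t₁ (iInf_le _ hmay))) hb
        · refine iSup_le fun k₂ => iSup_le fun t₂ => iSup_le fun hmust => ?_
          obtain ⟨a, I⟩ := k₂
          have hb : dK (a, I.widen δ) (a, I) + lam * g t₂ t₂ ≤ c := by
            rw [hg]
            exact le_trans (add_le_add_left (dK_widen_le a I δ) _) harith
          have hmust' : (S.widen δ).must s₁ (a, I.widen δ) t₂ := ⟨a, I, hmust, rfl⟩
          exact le_trans
            (iInf_le_of_le (a, I.widen δ) (iInf_le_of_le t₂ (iInf_le _ hmust'))) hb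
      · calc (dmF lam (S.widen δ) S) g s₁ s₂ ≤ ⊤ := le_top
          _ = g s₁ s₂ := by rw [hgdef]; simp [if_neg hne]
    have hdm : dm lam (S.widen δ) S ≤ g := OrderHom.lfp_le (dmF lam (S.widen δ) S) hpre
    calc dmInit lam (S.widen δ) S = dm lam (S.widen δ) S S.init S.init := rfl
      _ ≤ g S.init S.init := hdm _ _
      _ = c := hg _

end WMTSQuant
end

section
/- If a WMTS S' is an ε-relaxation of a WMTS S, then ⟦S'⟧ ⊆ ⟦S⟧^{+ε}, i.e., every implementation of S' is within modal refinement distance ε of S. -/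
open scoped ENNReal

namespace WMTSQuant

variable {Act : Type}

lemma dK_mono_left {Act : Type} {k k' ℓ : SLabel Act} (h : LabelLE k k') :
    dK k ℓ ≤ dK k' ℓ := by
  obtain ⟨ha, hlo, hhi⟩ := h
  unfold dK
  rw [ha]
  split_ifs with hc
  · exact erealToNNE_mono (max_le_max (EReal.sub_le_sub le_rfl hlo)
      (max_le_max (EReal.sub_le_sub hhi le_rfl) le_rfl))
  · exact le_rfl

/-- If `S₁` refines `S₂` then the distance from `S₁` to `S₃` is bounded by the
distance from `S₂` to `S₃`. -/
lemma dm_le_of_refines {Act : Type} (lam : ℝ≥0∞) (S₁ S₂ S₃ : WMTS Act)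
    (R : S₁.State → S₂.State → Prop)
    (hR : ∀ s₁ s₂, R s₁ s₂ →
      (∀ k₁ t₁, S₁.may s₁ k₁ t₁ →
        ∃ k₂ t₂, S₂.may s₂ k₂ t₂ ∧ LabelLE k₁ k₂ ∧ R t₁ t₂) ∧
      (∀ k₂ t₂, S₂.must s₂ k₂ t₂ →
        ∃ k₁ t₁, S₁.must s₁ k₁ t₁ ∧ LabelLE k₁ k₂ ∧ R t₁ t₂)) :
    ∀ s₁ s₂ s₃, R s₁ s₂ → dm lam S₁ S₃ s₁ s₃ ≤ dm lam S₂ S₃ s₂ s₃ := by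
  set g : S₁.State → S₃.State → ℝ≥0∞ :=
    fun s₁ s₃ => ⨅ s₂, ⨅ _ : R s₁ s₂, dm lam S₂ S₃ s₂ s₃ with hg
  have hfix : dmF lam S₂ S₃ (dm lam S₂ S₃) = dm lam S₂ S₃ :=
    OrderHom.map_lfp (dmF lam S₂ S₃)
  have hpre : dmF lam S₁ S₃ g ≤ g := by
    intro s₁ s₃
    refine le_iInf₂ fun s₂ hR12 => ?_
    rw [← hfix]
    refine max_le_max ?_ ?_
    · -- may part
      refine iSup_le fun k₁ => iSup_le fun t₁ => iSup_le fun hmay => ?_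
      obtain ⟨k₂, t₂, hmay₂, hle, hRt⟩ := (hR s₁ s₂ hR12).1 k₁ t₁ hmay
      refine le_trans ?_ (le_iSup₂_of_le k₂ t₂ (le_iSup_of_le hmay₂ le_rfl))
      refine le_iInf fun k₃ => le_iInf fun t₃ => le_iInf fun hmay₃ => ?_
      refine le_trans (iInf₂_le_of_le k₃ t₃ (iInf_le_of_le hmay₃ le_rfl)) ?_
      refine add_le_add (dK_mono_left hle) ?_
      exact mul_le_mul_right (iInf₂_le_of_le t₂ hRt le_rfl) lam
    · -- must part
      refine iSup_le fun k₃ => iSup_le fun t₃ => iSup_le fun hmust₃ => ?_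
      refine le_trans ?_ (le_iSup₂_of_le k₃ t₃ (le_iSup_of_le hmust₃ le_rfl))
      refine le_iInf fun k₂ => le_iInf fun t₂ => le_iInf fun hmust₂ => ?_
      obtain ⟨k₁, t₁, hmust₁, hle, hRt⟩ := (hR s₁ s₂ hR12).2 k₂ t₂ hmust₂
      refine le_trans (iInf₂_le_of_le k₁ t₁ (iInf_le_of_le hmust₁ le_rfl)) ?_
      refine add_le_add (dK_mono_left hle) ?_
      exact mul_le_mul_right (iInf₂_le_of_le t₂ hRt le_rfl) lam
  have hle : dm lam S₁ S₃ ≤ g := OrderHom.lfp_le _ hpre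
  intro s₁ s₂ s₃ h
  exact le_trans (hle s₁ s₃) (iInf₂_le s₂ h)

/-- if S' is an ε-relaxation of S then every implementation of
S' lies in the ε-extended implementation semantics of S. -/
theorem relaxation_impl_subset {Act : Type} (lam : ℝ≥0∞)
    (hlam0 : 0 < lam) (hlam1 : lam < 1) (ε : ℝ≥0∞) (S S' : WMTS Act)
    (hrel : Relaxation lam ε S S') :
    Impl S' ⊆ ImplExt lam ε S := by
  rintro I ⟨hImp, R, hR0, hR⟩
  refine ⟨hImp, ?_⟩
  calc dmInit lam I S ≤ dmInit lam S' S :=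
        dm_le_of_refines lam I S' S R hR _ _ _ hR0
    _ ≤ ε := hrel.2

end WMTSQuant
end
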